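/- Every Kähler–Einstein Fano triangle P ⊂ ℚ² is minimal: for each edge E of P with primitive inner normal u and height h = -min_{x ∈ P} u(x), one has max_{x ∈ P} u(x) ≥ h. -/
import Mathlib


abbrev Z2 := ℤ × ℤ
abbrev Q2 := ℚ × ℚ

/-- The canonical embedding of lattice points into `ℚ × ℚ`. -/
def toQ (v : Z2) : Q2 := ((v.1 : ℚ), (v.2 : ℚ))

/-- Pairing of a dual lattice vector with a rational point. -/
def dotQ (u : Z2) (x : Q2) : ℚ := (u.1 : ℚ) * x.1 + (u.2 : ℚ) * x.2

/-- A lattice vector is primitive if its coordinates are coprime. -/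
def IsPrimitive (v : Z2) : Prop := Int.gcd v.1 v.2 = 1

/-- Action of an integer matrix on `ℚ × ℚ`. -/
def applyM (G : Matrix (Fin 2) (Fin 2) ℤ) (x : Q2) : Q2 :=
  ((G 0 0 : ℚ) * x.1 + (G 0 1 : ℚ) * x.2, (G 1 0 : ℚ) * x.1 + (G 1 1 : ℚ) * x.2)

/-- Action of an integer matrix on `ℤ × ℤ`. -/
def applyZ (G : Matrix (Fin 2) (Fin 2) ℤ) (v : Z2) : Z2 :=
  (G 0 0 * v.1 + G 0 1 * v.2, G 1 0 * v.1 + G 1 1 * v.2)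

/-- The convex hull in `ℚ²` of a finite set of lattice points. -/
def hull (V : Finset Z2) : Set Q2 := convexHull ℚ (toQ '' (V : Set Z2))

/-- `V` is the vertex set of a Fano polygon: the origin is in the strict interior of the
convex hull, every vertex is primitive, and the points of `V` are exactly the vertices
(extreme points) of the hull. -/
def IsFanoPolygon (V : Finset Z2) : Prop :=
  (0 : Q2) ∈ interior (hull V) ∧
  (∀ v ∈ V, IsPrimitive v) ∧
  toQ '' (V : Set Z2) = Set.extremePoints ℚ (hull V)

/-- `E` is the edge of `P` with primitive inner normal `u` and height `h`:
`u ≥ -h` holds on `P`, with equality exactly on `E`, and `E` has more than one point. -/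
def IsEdge (P E : Set Q2) (u : Z2) (h : ℤ) : Prop :=
  IsPrimitive u ∧ 0 < h ∧
  (∀ x ∈ P, -(h : ℚ) ≤ dotQ u x) ∧
  E = {x ∈ P | dotQ u x = -(h : ℚ)} ∧
  ∃ a b, a ∈ E ∧ b ∈ E ∧ a ≠ b

/-- The lattice length of an edge: the number of lattice points on it minus one. -/
noncomputable def latticeLength (E : Set Q2) : ℕ :=
  Set.ncard {v : Z2 | toQ v ∈ E} - 1

/-- An edge is long if its lattice length is at least its height. -/
def IsLongEdge (P E : Set Q2) (u : Z2) (h : ℤ) : Prop :=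
  IsEdge P E u h ∧ h ≤ (latticeLength E : ℤ)

/-- `P` has a non-empty basket of R-singularities: some edge has lattice length
not a multiple of its height. -/
def HasRsing (P : Set Q2) : Prop :=
  ∃ E u h, IsEdge P E u h ∧ ¬ (h ∣ (latticeLength E : ℤ))

/-- Central symmetry: `P = -P`. -/
def CentSym (P : Set Q2) : Prop := ∀ x, x ∈ P ↔ -x ∈ P

/-- `G` is a lattice automorphism of `P`. -/
def IsAut (G : Matrix (Fin 2) (Fin 2) ℤ) (P : Set Q2) : Prop :=
  IsUnit G.det ∧ applyM G '' P = P

/-- `P` admits a lattice automorphism of order 3. -/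
def ThreeSym (P : Set Q2) : Prop := ∃ G, IsAut G P ∧ G ^ 3 = 1 ∧ G ≠ 1

/-- `P` is symmetric: the fixed-point set of its automorphism group is `{0}`. -/
def SymmetricPolygon (P : Set Q2) : Prop :=
  {x : Q2 | ∀ G, IsAut G P → applyM G x = x} = {0}


private lemma dotQ_sum' (u : Z2) (s : Finset Q2) (w : Q2 → ℚ) :
    dotQ u (∑ y ∈ s, w y • y) = ∑ y ∈ s, w y * dotQ u y := by
  simp only [dotQ, Prod.fst_sum, Prod.snd_sum, Prod.smul_fst, Prod.smul_snd, smul_eq_mul,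
    Finset.mul_sum, ← Finset.sum_add_distrib]
  exact Finset.sum_congr rfl fun y _ => by ring

private lemma face_rep' (u : Z2) (hq : ℚ) (s : Finset Q2)
    (hmin : ∀ y ∈ s, -hq ≤ dotQ u y) (x : Q2) (hx : x ∈ convexHull ℚ (s : Set Q2))
    (hdx : dotQ u x = -hq) :
    ∃ w : Q2 → ℚ, (∀ y ∈ s, 0 ≤ w y) ∧ (∑ y ∈ s, w y = 1) ∧ x = ∑ y ∈ s, w y • y ∧
      ∀ y ∈ s, w y ≠ 0 → dotQ u y = -hq := by
  rw [Finset.convexHull_eq] at hx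
  obtain ⟨w, hw0, hw1, hc⟩ := hx
  rw [Finset.centerMass_eq_of_sum_1 _ _ hw1] at hc
  simp only [id] at hc
  refine ⟨w, hw0, hw1, hc.symm, ?_⟩
  have key : ∑ y ∈ s, w y * (dotQ u y + hq) = 0 := by
    have h1 : ∑ y ∈ s, w y * dotQ u y = -hq := by
      rw [← dotQ_sum' u s w, hc, hdx]
    have h2 : ∑ y ∈ s, w y * hq = hq := by rw [← Finset.sum_mul, hw1, one_mul]
    calc ∑ y ∈ s, w y * (dotQ u y + hq) = ∑ y ∈ s, (w y * dotQ u y + w y * hq) := by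
            exact Finset.sum_congr rfl fun y _ => by ring
      _ = (∑ y ∈ s, w y * dotQ u y) + ∑ y ∈ s, w y * hq := Finset.sum_add_distrib
      _ = 0 := by rw [h1, h2]; ring
  intro y hy hwy
  have hz := (Finset.sum_eq_zero_iff_of_nonneg
    (fun i hi => mul_nonneg (hw0 i hi) (by linarith [hmin i hi]))).mp key y hy
  rcases mul_eq_zero.mp hz with h | h
  · exact absurd h hwy
  · linarith

private lemma face_two' (u : Z2) (hq : ℚ) (s : Finset Q2)
    (hmin : ∀ y ∈ s, -hq ≤ dotQ u y) (a b : Q2)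
    (ha : a ∈ convexHull ℚ (s : Set Q2)) (hb : b ∈ convexHull ℚ (s : Set Q2))
    (hda : dotQ u a = -hq) (hdb : dotQ u b = -hq) (hab : a ≠ b) :
    ∃ p ∈ s, ∃ q ∈ s, p ≠ q ∧ dotQ u p = -hq ∧ dotQ u q = -hq := by
  obtain ⟨w, hw0, hw1, hax, hwsup⟩ := face_rep' u hq s hmin a ha hda
  obtain ⟨w', hw0', hw1', hbx, hwsup'⟩ := face_rep' u hq s hmin b hb hdb
  by_contra hcon
  push_neg at hcon
  obtain ⟨p, hp, hwp⟩ : ∃ p ∈ s, w p ≠ 0 := by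
    by_contra h'
    push_neg at h'
    rw [Finset.sum_eq_zero h'] at hw1
    exact one_ne_zero hw1.symm
  have hdp := hwsup p hp hwp
  have huniq : ∀ y ∈ s, dotQ u y = -hq → y = p := by
    intro y hy hdy
    by_contra hne
    exact (hcon y hy p hp hne hdy) hdp
  have ha' : a = p := by
    rw [hax]
    have heach : ∀ y ∈ s, w y • y = w y • p := by
      intro y hy
      by_cases h0 : w y = 0
      · simp [h0]
      · rw [huniq y hy (hwsup y hy h0)]
    rw [Finset.sum_congr rfl heach, ← Finset.sum_smul, hw1, one_smul]
  have hb' : b = p := by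
    rw [hbx]
    have heach : ∀ y ∈ s, w' y • y = w' y • p := by
      intro y hy
      by_cases h0 : w' y = 0
      · simp [h0]
      · rw [huniq y hy (hwsup' y hy h0)]
    rw [Finset.sum_congr rfl heach, ← Finset.sum_smul, hw1', one_smul]
  exact hab (ha'.trans hb'.symm)

/-- Every Kähler–Einstein Fano triangle is minimal: for each edge with primitive inner
normal `u` and height `h`, some point of `P` satisfies `u(x) ≥ h`. -/
theorem stmt_5 (v₀ v₁ v₂ : Z2) (hcard : ({v₀, v₁, v₂} : Finset Z2).card = 3)
    (hF : IsFanoPolygon {v₀, v₁, v₂}) (hKE : v₀ + v₁ + v₂ = 0) :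
    ∀ E u h, IsEdge (hull {v₀, v₁, v₂}) E u h →
      ∃ x ∈ hull {v₀, v₁, v₂}, (h : ℚ) ≤ dotQ u x := by
  intro E u h hE
  obtain ⟨hprim, hpos, hmin, hEeq, a, b, haE, hbE, hab⟩ := hE
  subst hEeq
  obtain ⟨haP, hda⟩ := haE
  obtain ⟨hbP, hdb⟩ := hbE
  set s : Finset Q2 := ({v₀, v₁, v₂} : Finset Z2).image toQ with hsdef
  have hs : toQ '' (({v₀, v₁, v₂} : Finset Z2) : Set Z2) = (s : Set Q2) :=
    (Finset.coe_image).symm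
  have hhull : hull {v₀, v₁, v₂} = convexHull ℚ (s : Set Q2) := by rw [hull, hs]
  have hmin' : ∀ y ∈ s, -(h : ℚ) ≤ dotQ u y := by
    intro y hy
    exact hmin y (hhull ▸ subset_convexHull ℚ (s : Set Q2) hy)
  obtain ⟨p, hp, q, hq, hpq, hdp, hdq⟩ :=
    face_two' u (h : ℚ) s hmin' a b (hhull ▸ haP) (hhull ▸ hbP) hda hdb hab
  have hpos' : (0 : ℚ) < h := by exact_mod_cast hpos
  have h1 : (v₀.1 : ℚ) + v₁.1 + v₂.1 = 0 := by
    have := congrArg Prod.fst hKE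
    simp only [Prod.fst_add] at this
    exact_mod_cast this
  have h2 : (v₀.2 : ℚ) + v₁.2 + v₂.2 = 0 := by
    have := congrArg Prod.snd hKE
    simp only [Prod.snd_add] at this
    exact_mod_cast this
  have hsum : dotQ u (toQ v₀) + dotQ u (toQ v₁) + dotQ u (toQ v₂) = 0 := by
    simp only [dotQ, toQ]
    linear_combination (u.1 : ℚ) * h1 + (u.2 : ℚ) * h2
  have hv0 : toQ v₀ ∈ hull {v₀, v₁, v₂} :=
    subset_convexHull ℚ _ ⟨v₀, by simp, rfl⟩
  have hv1 : toQ v₁ ∈ hull {v₀, v₁, v₂} :=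
    subset_convexHull ℚ _ ⟨v₁, by simp, rfl⟩
  have hv2 : toQ v₂ ∈ hull {v₀, v₁, v₂} :=
    subset_convexHull ℚ _ ⟨v₂, by simp, rfl⟩
  simp only [hsdef, Finset.mem_image, Finset.mem_insert, Finset.mem_singleton] at hp hq
  obtain ⟨vp, hvp, rfl⟩ := hp
  obtain ⟨vq, hvq, rfl⟩ := hq
  rcases hvp with rfl | rfl | rfl <;> rcases hvq with rfl | rfl | rfl <;>
    first
      | exact absurd rfl hpq
      | exact ⟨toQ v₀, hv0, by linarith⟩
      | exact ⟨toQ v₁, hv1, by linarith⟩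
      | exact ⟨toQ v₂, hv2, by linarith⟩
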